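/- arXiv:1912.00723 — 2 statements merged into one kernel-verified Lean document; each statement's English description precedes it below -/
import Mathlib

section
/- In the IRL1 setting with level-set boundedness, the set Ω of cluster points of {x^k} is nonempty, and every x* ∈ Ω is a first-order stationary point of the ℓp-regularized problem min F(x) = f(x) + λ Σ_{i=1}^n |x_i|^p; that is, ∇_i f(x*) + λ p |x_i*|^{p−1} sign(x_i*) = 0 for every i with x_i* ≠ 0. -/
open Filter Topology
open scoped RealInnerProductSpace
open Filter Topology
open scoped RealInnerProductSpace


-- tangent line bound for rpow, 0<p<1, a,b>0 : b^p ≤ a^p + p*a^(p-1)*(b-a)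
lemma rpow_tangent (p a b : ℝ) (hp0 : 0 < p) (hp1 : p < 1) (ha : 0 < a) (hb : 0 < b) :
    b ^ p ≤ a ^ p + p * a ^ (p - 1) * (b - a) := by
  have hs : -1 ≤ b / a - 1 := by
    have : 0 ≤ b / a := by positivity
    linarith
  have h := rpow_one_add_le_one_add_mul_self hs hp0.le hp1.le
  rw [add_sub_cancel] at h
  have h2 : (b / a) ^ p ≤ 1 + p * (b / a - 1) := h
  have h3 : a ^ p * (b / a) ^ p ≤ a ^ p * (1 + p * (b / a - 1)) := by
    apply mul_le_mul_of_nonneg_left h2 (Real.rpow_nonneg ha.le p)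
  have h4 : a ^ p * (b / a) ^ p = b ^ p := by
    rw [← Real.mul_rpow ha.le (by positivity)]
    congr 1
    field_simp
  have h5 : a ^ p * (1 + p * (b / a - 1)) = a ^ p + p * a ^ (p - 1) * (b - a) := by
    have : a ^ (p - 1) = a ^ p / a := by
      rw [Real.rpow_sub ha, Real.rpow_one]
    rw [this]
    field_simp
  rw [h4, h5] at h3
  exact h3

variable {E : Type*} [NormedAddCommGroup E] [InnerProductSpace ℝ E] [CompleteSpace E]

lemma hasDerivAt_line (f : E → ℝ) (hf : Differentiable ℝ f) (a v : E) (t : ℝ) :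
    HasDerivAt (fun s : ℝ => f (a + s • v)) ⟪gradient f (a + t • v), v⟫ t := by
  have hc : HasDerivAt (fun s : ℝ => a + s • v) v t := by
    simpa using ((hasDerivAt_id t).smul_const v).const_add a
  have hF : HasFDerivAt f (InnerProductSpace.toDual ℝ E (gradient f (a + t • v))) (a + t • v) :=
    (hf (a + t • v)).hasGradientAt.hasFDerivAt
  have := hF.comp_hasDerivAt t hc
  simpa [InnerProductSpace.toDual_apply_apply, Function.comp_def] using this

/-- Descent lemma. -/
lemma descent_lemma (f : E → ℝ) (hf : Differentiable ℝ f) {Lf : ℝ} (hLf : 0 ≤ Lf)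
    (hlip : ∀ a b, ‖gradient f a - gradient f b‖ ≤ Lf * ‖a - b‖) (a b : E) :
    f b ≤ f a + ⟪gradient f a, b - a⟫ + Lf / 2 * ‖b - a‖ ^ 2 := by
  set v := b - a with hv
  set g : ℝ → ℝ := fun t => f (a + t • v) - t * ⟪gradient f a, v⟫ - Lf / 2 * t ^ 2 * ‖v‖ ^ 2
    with hg
  have hderiv : ∀ t : ℝ, HasDerivAt g
      (⟪gradient f (a + t • v), v⟫ - ⟪gradient f a, v⟫ - Lf / 2 * (2 * t) * ‖v‖ ^ 2) t := by
    intro t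
    have h1 := hasDerivAt_line f hf a v t
    have h2 : HasDerivAt (fun t : ℝ => t * ⟪gradient f a, v⟫) ⟪gradient f a, v⟫ t := by
      simpa using (hasDerivAt_id t).mul_const ⟪gradient f a, v⟫
    have h3 : HasDerivAt (fun t : ℝ => Lf / 2 * t ^ 2 * ‖v‖ ^ 2) (Lf / 2 * (2 * t) * ‖v‖ ^ 2) t := by
      have := ((hasDerivAt_pow 2 t).const_mul (Lf / 2)).mul_const (‖v‖ ^ 2)
      simpa [mul_comm, mul_assoc, mul_left_comm] using this
    exact (h1.sub h2).sub h3
  have hmono : g 1 ≤ g 0 := by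
    have hanti : AntitoneOn g (Set.Icc (0:ℝ) 1) := by
      apply antitoneOn_of_deriv_nonpos (convex_Icc 0 1)
      · exact Continuous.continuousOn
          (Differentiable.continuous (fun t => (hderiv t).differentiableAt))
      · intro t ht
        exact (hderiv t).differentiableAt.differentiableWithinAt
      · intro t ht
        rw [(hderiv t).deriv]
        rw [interior_Icc] at ht
        have ht0 : 0 < t := ht.1
        have key : ⟪gradient f (a + t • v) - gradient f a, v⟫ ≤ Lf * t * ‖v‖ ^ 2 := by
          calc ⟪gradient f (a + t • v) - gradient f a, v⟫
              ≤ ‖gradient f (a + t • v) - gradient f a‖ * ‖v‖ := real_inner_le_norm _ _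
            _ ≤ (Lf * ‖(a + t • v) - a‖) * ‖v‖ := by
                apply mul_le_mul_of_nonneg_right (hlip _ _) (norm_nonneg _)
            _ = Lf * t * ‖v‖ ^ 2 := by
                rw [add_sub_cancel_left, norm_smul]
                simp [abs_of_pos ht0]
                ring
        rw [inner_sub_left] at key
        nlinarith [key]
    exact hanti (by norm_num) (by norm_num) (by norm_num)
  have h0 : g 0 = f a := by simp [hg]
  have h1 : g 1 = f b - ⟪gradient f a, v⟫ - Lf / 2 * ‖v‖ ^ 2 := by
    simp [hg, hv]
  rw [h0, h1] at hmono
  linarith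
lemma strong_tangent (Q : E → ℝ) (hQ : Differentiable ℝ Q) {M : ℝ}
    (hsc : ConvexOn ℝ Set.univ (fun z => Q z - M / 2 * ‖z‖ ^ 2)) (a b : E) :
    Q a + ⟪gradient Q a, b - a⟫ + M / 2 * ‖b - a‖ ^ 2 ≤ Q b := by
  set v := b - a with hv
  set φ : ℝ → ℝ := fun t => Q (a + t • v) - M / 2 * ‖a + t • v‖ ^ 2 with hφ
  have hconv : ConvexOn ℝ Set.univ φ := by
    have hA := hsc.comp_affineMap (AffineMap.lineMap a b)
    have : φ = (fun z => Q z - M / 2 * ‖z‖ ^ 2) ∘ (AffineMap.lineMap a b) := by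
      funext t
      have hvec : a + t • (b - a) = (1 - t) • a + t • b := by module
      simp [hφ, AffineMap.lineMap_apply_module, hv, hvec]
    rw [this]
    simpa using hA
  have hd2 : HasDerivAt (fun t : ℝ => M / 2 * ‖a + t • v‖ ^ 2)
      (M / 2 * (2 * ⟪a, v⟫)) 0 := by
    have heq : (fun t : ℝ => M / 2 * ‖a + t • v‖ ^ 2)
        = fun t : ℝ => M / 2 * (‖a‖ ^ 2 + 2 * (t * ⟪a, v⟫) + t ^ 2 * ‖v‖ ^ 2) := by
      funext t
      rw [norm_add_sq_real, real_inner_smul_right, norm_smul]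
      rw [mul_pow, Real.norm_eq_abs, sq_abs]
    rw [heq]
    have : HasDerivAt (fun t : ℝ => ‖a‖ ^ 2 + 2 * (t * ⟪a, v⟫) + t ^ 2 * ‖v‖ ^ 2)
        (2 * ⟪a, v⟫) 0 := by
      have h1 : HasDerivAt (fun t : ℝ => t * ⟪a, v⟫) ⟪a, v⟫ 0 := by
        simpa using (hasDerivAt_id (0:ℝ)).mul_const ⟪a, v⟫
      have h2 : HasDerivAt (fun t : ℝ => t ^ 2 * ‖v‖ ^ 2) 0 0 := by
        simpa using (hasDerivAt_pow 2 (0:ℝ)).mul_const (‖v‖ ^ 2)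
      have := ((h1.const_mul 2).const_add (‖a‖ ^ 2)).add h2
      simpa [Pi.add_def] using this
    simpa using this.const_mul (M / 2)
  have hd1 : HasDerivAt (fun t : ℝ => Q (a + t • v)) ⟪gradient Q a, v⟫ 0 := by
    have := hasDerivAt_line Q hQ a v 0
    simpa using this
  have hdφ : HasDerivAt φ (⟪gradient Q a, v⟫ - M / 2 * (2 * ⟪a, v⟫)) 0 := hd1.sub hd2
  have hslope := hconv.le_slope_of_hasDerivAt (Set.mem_univ (0:ℝ)) (Set.mem_univ (1:ℝ))
    zero_lt_one hdφ
  rw [slope_def_field] at hslope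
  have hφ0 : φ 0 = Q a - M / 2 * ‖a‖ ^ 2 := by simp [hφ]
  have hφ1 : φ 1 = Q b - M / 2 * ‖b‖ ^ 2 := by simp [hφ, hv]
  have hnb : ‖b‖ ^ 2 = ‖a‖ ^ 2 + 2 * ⟪a, v⟫ + ‖v‖ ^ 2 := by
    have : b = a + v := by rw [hv]; abel
    rw [this, norm_add_sq_real]
  rw [hφ0, hφ1, hnb] at hslope
  have hdiv : (Q b - M / 2 * (‖a‖ ^ 2 + 2 * ⟪a, v⟫ + ‖v‖ ^ 2) - (Q a - M / 2 * ‖a‖ ^ 2)) / (1 - 0)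
      = Q b - Q a - M / 2 * (2 * ⟪a, v⟫) - M / 2 * ‖v‖ ^ 2 := by ring
  rw [hdiv] at hslope
  linarith

lemma strong_min (ψ : E → ℝ) {M : ℝ}
    (hsc : ConvexOn ℝ Set.univ (fun z => ψ z - M / 2 * ‖z‖ ^ 2)) (xs : E)
    (hmin : ∀ z, ψ xs ≤ ψ z) (z : E) :
    ψ xs + M / 2 * ‖z - xs‖ ^ 2 ≤ ψ z := by
  have hu : StrongConvexOn Set.univ M ψ := strongConvexOn_iff_convex.2 hsc
  set c : ℝ := M / 2 * ‖z - xs‖ ^ 2 with hc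
  have key : ∀ b : ℝ, 0 ≤ b → b < 1 → ψ xs + b * c ≤ ψ z := by
    intro b hb0 hb1
    have ha : (0:ℝ) < 1 - b := by linarith
    have h2 := hu.2 (Set.mem_univ z) (Set.mem_univ xs) ha.le hb0 (by ring)
    have h3 := hmin ((1 - b) • z + b • xs)
    simp only [smul_eq_mul] at h2
    have h4 : ψ xs ≤ (1 - b) * ψ z + b * ψ xs - (1 - b) * b * (M / 2 * ‖z - xs‖ ^ 2) :=
      le_trans h3 h2
    have h5 : (1 - b) * (ψ xs + b * c) ≤ (1 - b) * ψ z := by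
      have hring : (1 - b) * (ψ xs + b * c) - (1 - b) * ψ z
          = ψ xs - ((1 - b) * ψ z + b * ψ xs - (1 - b) * b * (M / 2 * ‖z - xs‖ ^ 2)) := by
        rw [hc]; ring
      linarith
    exact le_of_mul_le_mul_left h5 ha
  have htend : Tendsto (fun m : ℕ => ψ xs + ((m : ℝ) / (m + 1)) * c) atTop
      (𝓝 (ψ xs + c)) := by
    have h1 : Tendsto (fun m : ℕ => (m : ℝ) / (m + 1)) atTop (𝓝 1) :=
      tendsto_natCast_div_add_atTop 1
    simpa using (h1.mul_const c).const_add (ψ xs)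
  refine le_of_tendsto htend (Filter.Eventually.of_forall fun m => ?_)
  refine key _ (by positivity) ?_
  rw [div_lt_one (by positivity)]
  linarith
lemma convexOn_weighted_l1 {n : ℕ} (w : Fin n → ℝ) (hw : ∀ j, 0 ≤ w j) (lam : ℝ)
    (hlam : 0 ≤ lam) :
    ConvexOn ℝ Set.univ (fun z : EuclideanSpace ℝ (Fin n) => lam * ∑ j, w j * |z j|) := by
  refine ⟨convex_univ, fun x _ y _ a b ha hb hab => ?_⟩
  simp only [smul_eq_mul]
  have hj : ∀ j, w j * |(a • x + b • y) j| ≤ a * (w j * |x j|) + b * (w j * |y j|) := by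
    intro j
    have happ : (a • x + b • y) j = a * x j + b * y j := by
      simp [PiLp.add_apply, PiLp.smul_apply, smul_eq_mul]
    have habs : |(a • x + b • y) j| ≤ a * |x j| + b * |y j| := by
      rw [happ]
      refine (abs_add_le _ _).trans ?_
      rw [abs_mul, abs_mul, abs_of_nonneg ha, abs_of_nonneg hb]
    calc w j * |(a • x + b • y) j| ≤ w j * (a * |x j| + b * |y j|) :=
          mul_le_mul_of_nonneg_left habs (hw j)
      _ = a * (w j * |x j|) + b * (w j * |y j|) := by ring
  calc lam * ∑ j, w j * |(a • x + b • y) j|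
      ≤ lam * ∑ j, (a * (w j * |x j|) + b * (w j * |y j|)) := by
        apply mul_le_mul_of_nonneg_left (Finset.sum_le_sum fun j _ => hj j) hlam
    _ = a * (lam * ∑ j, w j * |x j|) + b * (lam * ∑ j, w j * |y j|) := by
        rw [Finset.sum_add_distrib, ← Finset.mul_sum, ← Finset.mul_sum]
        ring


section
variable {n : ℕ}
lemma coord_opt {n : ℕ} (Q : EuclideanSpace ℝ (Fin n) → ℝ) (hQ : Differentiable ℝ Q)
    (w : Fin n → ℝ) (lam : ℝ) (xs : EuclideanSpace ℝ (Fin n))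
    (hmin : ∀ z : EuclideanSpace ℝ (Fin n),
      Q xs + lam * ∑ j, w j * |xs j| ≤ Q z + lam * ∑ j, w j * |z j|)
    (i : Fin n) (hne : xs i ≠ 0) :
    gradient Q xs i + lam * w i * Real.sign (xs i) = 0 := by
  set v : EuclideanSpace ℝ (Fin n) := EuclideanSpace.single i (1:ℝ) with hv
  have hcoord : ∀ (t : ℝ) (j : Fin n), (xs + t • v) j = xs j + if j = i then t else 0 := by
    intro t j
    simp [hv, EuclideanSpace.single_apply]
  have hcoord_i : ∀ t : ℝ, (xs + t • v) i = xs i + t := by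
    intro t; rw [hcoord]; simp
  have hcoord_ne : ∀ (t : ℝ) (j : Fin n), j ≠ i → (xs + t • v) j = xs j := by
    intro t j hj; rw [hcoord]; simp [hj]
  -- the one-dimensional function
  set ψ : ℝ → ℝ := fun t => Q (xs + t • v) + lam * (w i * |xs i + t|) with hψ
  have hψmin : ∀ t, ψ 0 ≤ ψ t := by
    intro t
    have h := hmin (xs + t • v)
    have hsum : ∀ s : ℝ, ∑ j, w j * |(xs + s • v) j|
        = (∑ j ∈ Finset.univ.erase i, w j * |xs j|) + w i * |xs i + s| := by
      intro s
      rw [← Finset.sum_erase_add _ _ (Finset.mem_univ i), hcoord_i]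
      congr 1
      apply Finset.sum_congr rfl
      intro j hj
      rw [hcoord_ne s j (Finset.ne_of_mem_erase hj)]
    rw [hsum] at h
    have hsum0 : ∑ j, w j * |xs j|
        = (∑ j ∈ Finset.univ.erase i, w j * |xs j|) + w i * |xs i| := by
      rw [← Finset.sum_erase_add _ _ (Finset.mem_univ i)]
    rw [hsum0] at h
    have h0 : xs + (0:ℝ) • v = xs := by simp
    simp only [hψ, h0, add_zero, zero_smul]
    rw [mul_add, mul_add] at h
    linarith
  -- near 0, |xs i + t| = sign(xs i) * (xs i + t)
  set σ : ℝ := Real.sign (xs i) with hσ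
  have habs : ∀ᶠ t in 𝓝 (0:ℝ), |xs i + t| = σ * (xs i + t) := by
    have hball : Set.Ioo (-|xs i|) (|xs i|) ∈ 𝓝 (0:ℝ) :=
      Ioo_mem_nhds (by simpa using abs_pos.2 hne) (abs_pos.2 hne)
    filter_upwards [hball] with t ht
    rcases lt_or_gt_of_ne hne with hneg | hpos
    · have : xs i + t < 0 := by
        have := ht.2
        rw [abs_of_neg hneg] at this
        linarith
      rw [abs_of_neg this, hσ, Real.sign_of_neg hneg]
      ring
    · have : 0 < xs i + t := by
        have := ht.1
        rw [abs_of_pos hpos] at this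
        linarith
      rw [abs_of_pos this, hσ, Real.sign_of_pos hpos]
      ring
  -- φ : smooth version of ψ near 0
  set φ : ℝ → ℝ := fun t => Q (xs + t • v) + lam * (w i * (σ * (xs i + t))) with hφ
  have hψloc : IsLocalMin ψ 0 := Filter.Eventually.of_forall hψmin
  have hloc : IsLocalMin φ 0 := by
    apply IsLocalMin.congr hψloc
    filter_upwards [habs] with t ht
    simp [hψ, hφ, ht]
  have hD : HasDerivAt φ (⟪gradient Q xs, v⟫ + lam * (w i * σ)) 0 := by
    have h1 : HasDerivAt (fun t : ℝ => Q (xs + t • v)) ⟪gradient Q xs, v⟫ 0 := by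
      have := hasDerivAt_line Q hQ xs v 0
      simpa using this
    have h2 : HasDerivAt (fun t : ℝ => lam * (w i * (σ * (xs i + t)))) (lam * (w i * σ)) 0 := by
      have hb : HasDerivAt (fun t : ℝ => xs i + t) 1 0 := by
        simpa using (hasDerivAt_id (0:ℝ)).const_add (xs i)
      have := ((hb.const_mul σ).const_mul (w i)).const_mul lam
      simpa using this
    exact h1.add h2
  have hzero := hloc.hasDerivAt_eq_zero hD
  have hinner : ⟪gradient Q xs, v⟫ = gradient Q xs i := by
    rw [hv, EuclideanSpace.inner_single_right]
    simp
  rw [hinner] at hzero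
  show gradient Q xs i + lam * w i * σ = 0
  linarith [hzero]

end

/-- The weight function `w(t, s) = p(|t| + s)^(p-1)`. -/
noncomputable def wfun (p t s : ℝ) : ℝ := p * (|t| + s) ^ (p - 1)

/-- The IRL1 setting (Algorithm 2.1 of the paper): fixed data `p ∈ (0,1)`, `λ > 0`,
`μ ∈ (0,1)`, a differentiable `f` with `Lf`-Lipschitz gradient (`Lf ≥ 0`), iterates
`x^k`, positive parameters `ε^k` with `ε^{k+1} ≤ μ ε^k` componentwise, and for each `k`
a differentiable model `Q_k` with `∇Q_k(x^k) = ∇f(x^k)`, `M`-strongly convex with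
`M > Lf/2` (strong convexity meaning `z ↦ Q_k z - (M/2)‖z‖²` is convex), `∇Q_k`
`L`-Lipschitz, such that `x^{k+1}` is a global minimizer of
`G(·; x^k, ε^k) = Q_k(·) + λ Σᵢ w(xᵢ^k, εᵢ^k)|·ᵢ|`. -/
structure IRL1 (n : ℕ) where
  p : ℝ
  lam : ℝ
  mu : ℝ
  Lf : ℝ
  M : ℝ
  L : ℝ
  f : EuclideanSpace ℝ (Fin n) → ℝ
  x : ℕ → EuclideanSpace ℝ (Fin n)
  eps : ℕ → Fin n → ℝ
  Q : ℕ → EuclideanSpace ℝ (Fin n) → ℝ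
  hp0 : 0 < p
  hp1 : p < 1
  hlam : 0 < lam
  hmu0 : 0 < mu
  hmu1 : mu < 1
  hLf : 0 ≤ Lf
  hM : Lf / 2 < M
  hf_diff : Differentiable ℝ f
  hf_lip : ∀ a b, ‖gradient f a - gradient f b‖ ≤ Lf * ‖a - b‖
  heps_pos : ∀ k i, 0 < eps k i
  heps_dec : ∀ k i, eps (k + 1) i ≤ mu * eps k i
  hQ_diff : ∀ k, Differentiable ℝ (Q k)
  hQ_grad : ∀ k, gradient (Q k) (x k) = gradient f (x k)
  hQ_sconv : ∀ k, ConvexOn ℝ Set.univ (fun z => Q k z - M / 2 * ‖z‖ ^ 2)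
  hQ_lip : ∀ k a b, ‖gradient (Q k) a - gradient (Q k) b‖ ≤ L * ‖a - b‖
  hmin : ∀ k, ∀ z : EuclideanSpace ℝ (Fin n),
    Q k (x (k + 1)) + lam * ∑ i, wfun p (x k i) (eps k i) * |x (k + 1) i|
      ≤ Q k z + lam * ∑ i, wfun p (x k i) (eps k i) * |z i|

/-- The smoothed objective `F(x, ε) = f(x) + λ Σᵢ (|xᵢ| + εᵢ)^p`. -/
noncomputable def IRL1.Feps {n : ℕ} (S : IRL1 n)
    (z : EuclideanSpace ℝ (Fin n)) (e : Fin n → ℝ) : ℝ :=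
  S.f z + S.lam * ∑ i, (|z i| + e i) ^ S.p

/-- The objective `F(x) = f(x) + λ Σᵢ |xᵢ|^p`. -/
noncomputable def IRL1.Fobj {n : ℕ} (S : IRL1 n) (z : EuclideanSpace ℝ (Fin n)) : ℝ :=
  S.f z + S.lam * ∑ i, |z i| ^ S.p

/-- The subproblem objective `G(z; x^k, ε^k)`. -/
noncomputable def IRL1.G {n : ℕ} (S : IRL1 n) (k : ℕ)
    (z : EuclideanSpace ℝ (Fin n)) : ℝ :=
  S.Q k z + S.lam * ∑ i, wfun S.p (S.x k i) (S.eps k i) * |z i|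

/-- The level set `{x : F(x) ≤ F(x⁰, ε⁰)}` is bounded. -/
def IRL1.LevelBounded {n : ℕ} (S : IRL1 n) : Prop :=
  Bornology.IsBounded {z : EuclideanSpace ℝ (Fin n) | S.Fobj z ≤ S.Feps (S.x 0) (S.eps 0)}

lemma wfun_pos {p t s : ℝ} (hp : 0 < p) (hs : 0 < s) : 0 < wfun p t s := by
  have : (0:ℝ) < |t| + s := by positivity
  exact mul_pos hp (Real.rpow_pos_of_pos this _)

lemma irl1_descent {n : ℕ} (S : IRL1 n) (k : ℕ) :
    S.Feps (S.x (k + 1)) (S.eps (k + 1)) + (S.M - S.Lf / 2) * ‖S.x (k + 1) - S.x k‖ ^ 2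
      ≤ S.Feps (S.x k) (S.eps k) := by
  set w : Fin n → ℝ := fun j => wfun S.p (S.x k j) (S.eps k j) with hw
  have hwpos : ∀ j, 0 < w j := fun j => wfun_pos S.hp0 (S.heps_pos k j)
  set xk := S.x k
  set xp := S.x (k + 1)
  have hi := descent_lemma S.f S.hf_diff S.hLf S.hf_lip xk xp
  have hii := strong_tangent (S.Q k) (S.hQ_diff k) (S.hQ_sconv k) xk xp
  rw [S.hQ_grad k] at hii
  have hGconv : ConvexOn ℝ Set.univ
      (fun z : EuclideanSpace ℝ (Fin n) =>
        (S.Q k z + S.lam * ∑ j, w j * |z j|) - S.M / 2 * ‖z‖ ^ 2) := by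
    have hadd := (S.hQ_sconv k).add
      (convexOn_weighted_l1 w (fun j => (hwpos j).le) S.lam S.hlam.le)
    have heq : (fun z : EuclideanSpace ℝ (Fin n) =>
        (S.Q k z + S.lam * ∑ j, w j * |z j|) - S.M / 2 * ‖z‖ ^ 2)
        = fun z => (S.Q k z - S.M / 2 * ‖z‖ ^ 2) + S.lam * ∑ j, w j * |z j| := by
      funext z; ring
    rw [heq]
    exact hadd
  have hiii := strong_min _ hGconv xp (fun z => S.hmin k z) xk
  rw [norm_sub_rev xk xp] at hiii
  -- (iv) rpow tangent bound per coordinate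
  have hiv : ∀ j, (|xp j| + S.eps (k + 1) j) ^ S.p
      ≤ (|xk j| + S.eps k j) ^ S.p + w j * (|xp j| - |xk j|) := by
    intro j
    have ha : (0:ℝ) < |xk j| + S.eps k j := by
      have := S.heps_pos k j; positivity
    have hb : (0:ℝ) < |xp j| + S.eps (k + 1) j := by
      have := S.heps_pos (k + 1) j; positivity
    have ht := rpow_tangent S.p _ _ S.hp0 S.hp1 ha hb
    have hwj : w j = S.p * (|xk j| + S.eps k j) ^ (S.p - 1) := rfl
    have heps : S.eps (k + 1) j ≤ S.eps k j := by
      have h1 := S.heps_dec k j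
      have h2 := S.heps_pos k j
      nlinarith [S.hmu1, S.hmu0]
    have hdiff : (|xp j| + S.eps (k + 1) j) - (|xk j| + S.eps k j)
        ≤ |xp j| - |xk j| := by linarith
    calc (|xp j| + S.eps (k + 1) j) ^ S.p
        ≤ (|xk j| + S.eps k j) ^ S.p + S.p * (|xk j| + S.eps k j) ^ (S.p - 1) *
            ((|xp j| + S.eps (k + 1) j) - (|xk j| + S.eps k j)) := ht
      _ ≤ (|xk j| + S.eps k j) ^ S.p + w j * (|xp j| - |xk j|) := by
          have hmono := mul_le_mul_of_nonneg_left hdiff (hwpos j).le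
          rw [hwj] at hmono
          rw [hwj]
          linarith
  have hsumiv : ∑ j, (|xp j| + S.eps (k + 1) j) ^ S.p
      ≤ (∑ j, (|xk j| + S.eps k j) ^ S.p)
        + ((∑ j, w j * |xp j|) - ∑ j, w j * |xk j|) := by
    calc ∑ j, (|xp j| + S.eps (k + 1) j) ^ S.p
        ≤ ∑ j, ((|xk j| + S.eps k j) ^ S.p + w j * (|xp j| - |xk j|)) :=
          Finset.sum_le_sum fun j _ => hiv j
      _ = (∑ j, (|xk j| + S.eps k j) ^ S.p)
          + ((∑ j, w j * |xp j|) - ∑ j, w j * |xk j|) := by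
          rw [Finset.sum_add_distrib, ← Finset.sum_sub_distrib]
          congr 1
          apply Finset.sum_congr rfl
          intro j _
          ring
  have hlam := S.hlam
  have hmul := mul_le_mul_of_nonneg_left hsumiv hlam.le
  simp only [IRL1.Feps]
  nlinarith [hi, hii, hiii, hmul, sq_nonneg ‖xp - xk‖]

lemma coord_abs_le_norm {n : ℕ} (u : EuclideanSpace ℝ (Fin n)) (i : Fin n) : |u i| ≤ ‖u‖ := by
  have h1 : ⟪u, EuclideanSpace.single i (1:ℝ)⟫ = u i := by
    rw [EuclideanSpace.inner_single_right]; simp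
  calc |u i| = |⟪u, EuclideanSpace.single i (1:ℝ)⟫| := by rw [h1]
    _ ≤ ‖u‖ * ‖EuclideanSpace.single i (1:ℝ)‖ := abs_real_inner_le_norm _ _
    _ = ‖u‖ := by rw [EuclideanSpace.norm_single]; simp

/-- In the IRL1 setting with bounded level set, the set of cluster
points of `{x^k}` is nonempty, and every cluster point `x*` is first-order
stationary for `min f(x) + λ Σᵢ |xᵢ|^p`, i.e.
`∇ᵢf(x*) + λ p |x*_i|^(p-1) sign(x*_i) = 0` whenever `x*_i ≠ 0`. -/
theorem stmt12 {n : ℕ} (S : IRL1 n) (hbdd : S.LevelBounded) :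
    (∃ (xstar : EuclideanSpace ℝ (Fin n)) (φ : ℕ → ℕ), StrictMono φ ∧
      Tendsto (fun k => S.x (φ k)) atTop (nhds xstar)) ∧
    ∀ xstar : EuclideanSpace ℝ (Fin n),
      (∃ φ : ℕ → ℕ, StrictMono φ ∧ Tendsto (fun k => S.x (φ k)) atTop (nhds xstar)) →
      ∀ i : Fin n, xstar i ≠ 0 →
        gradient S.f xstar i +
          S.lam * S.p * |xstar i| ^ (S.p - 1) * Real.sign (xstar i) = 0 := by
  classical
  have hcpos : 0 < S.M - S.Lf / 2 := by linarith [S.hM]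
  set s : ℕ → ℝ := fun k => S.Feps (S.x k) (S.eps k) with hs
  have hdesc : ∀ k, s (k + 1) + (S.M - S.Lf / 2) * ‖S.x (k + 1) - S.x k‖ ^ 2 ≤ s k :=
    fun k => irl1_descent S k
  have hs_anti : Antitone s := antitone_nat_of_succ_le fun k => by
    have h := hdesc k
    nlinarith [sq_nonneg ‖S.x (k + 1) - S.x k‖]
  have hFle : ∀ k, S.Fobj (S.x k) ≤ s k := by
    intro k
    have hterm : ∀ j, |S.x k j| ^ S.p ≤ (|S.x k j| + S.eps k j) ^ S.p := fun j =>
      Real.rpow_le_rpow (abs_nonneg _) (le_add_of_nonneg_right (S.heps_pos k j).le) S.hp0.le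
    have hsum := Finset.sum_le_sum (fun j (_ : j ∈ Finset.univ) => hterm j)
    have := mul_le_mul_of_nonneg_left hsum S.hlam.le
    simp only [hs, IRL1.Fobj, IRL1.Feps]
    linarith
  have hmem : ∀ k, S.x k ∈
      closure {z : EuclideanSpace ℝ (Fin n) | S.Fobj z ≤ S.Feps (S.x 0) (S.eps 0)} := by
    intro k
    apply subset_closure
    exact Set.mem_setOf.2 ((hFle k).trans (hs_anti (Nat.zero_le k)))
  have hKcomp := hbdd.isCompact_closure
  obtain ⟨x0, _, φ0, hφ0, hconv0⟩ := hKcomp.tendsto_subseq hmem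
  refine ⟨⟨x0, φ0, hφ0, hconv0⟩, ?_⟩
  -- lower bound for s
  obtain ⟨zm, _, hzm'⟩ := hKcomp.exists_isMinOn ⟨S.x 0, hmem 0⟩
    S.hf_diff.continuous.continuousOn
  have hzm : ∀ y ∈ closure {z : EuclideanSpace ℝ (Fin n) |
      S.Fobj z ≤ S.Feps (S.x 0) (S.eps 0)}, S.f zm ≤ S.f y := fun y hy => hzm' hy
  have hsbd : ∀ k, S.f zm ≤ s k := by
    intro k
    have h1 : S.f (S.x k) ≤ s k := by
      have hterm : ∀ j, (0:ℝ) ≤ (|S.x k j| + S.eps k j) ^ S.p := fun j =>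
        Real.rpow_nonneg (add_nonneg (abs_nonneg _) (S.heps_pos k j).le) _
      have hsum : (0:ℝ) ≤ ∑ j, (|S.x k j| + S.eps k j) ^ S.p :=
        Finset.sum_nonneg fun j _ => hterm j
      have := mul_nonneg S.hlam.le hsum
      simp only [hs, IRL1.Feps]
      linarith
    exact (hzm _ (hmem k)).trans h1
  have hs_conv : Tendsto s atTop (𝓝 (⨅ k, s k)) :=
    tendsto_atTop_ciInf hs_anti ⟨S.f zm, by rintro _ ⟨k, rfl⟩; exact hsbd k⟩
  have hdiff0 : Tendsto (fun k => s k - s (k + 1)) atTop (𝓝 0) := by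
    have h2 : Tendsto (fun k => s (k + 1)) atTop (𝓝 (⨅ k, s k)) :=
      hs_conv.comp (tendsto_add_atTop_nat 1)
    simpa using hs_conv.sub h2
  have hnormsq : Tendsto (fun k => ‖S.x (k + 1) - S.x k‖ ^ 2) atTop (𝓝 0) := by
    apply squeeze_zero (fun k => sq_nonneg _) (g := fun k => (s k - s (k + 1)) / (S.M - S.Lf / 2))
    · intro k
      rw [le_div_iff₀ hcpos]
      have := hdesc k
      linarith
    · simpa using hdiff0.div_const (S.M - S.Lf / 2)
  have hΔ : Tendsto (fun k => S.x (k + 1) - S.x k) atTop (𝓝 0) := by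
    rw [tendsto_zero_iff_norm_tendsto_zero]
    have heq : (fun k => ‖S.x (k + 1) - S.x k‖)
        = fun k => Real.sqrt (‖S.x (k + 1) - S.x k‖ ^ 2) :=
      funext fun k => (Real.sqrt_sq (norm_nonneg _)).symm
    rw [heq]
    have h2 := (Real.continuous_sqrt.tendsto 0).comp hnormsq
    rw [Real.sqrt_zero] at h2
    exact h2.congr fun k => rfl
  have heps0 : ∀ i, Tendsto (fun k => S.eps k i) atTop (𝓝 0) := by
    intro i
    have hub : ∀ k, S.eps k i ≤ S.mu ^ k * S.eps 0 i := by
      intro k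
      induction k with
      | zero => simp
      | succ k ih =>
        calc S.eps (k + 1) i ≤ S.mu * S.eps k i := S.heps_dec k i
          _ ≤ S.mu * (S.mu ^ k * S.eps 0 i) := mul_le_mul_of_nonneg_left ih S.hmu0.le
          _ = S.mu ^ (k + 1) * S.eps 0 i := by ring
    apply squeeze_zero (fun k => (S.heps_pos k i).le) hub
    have := tendsto_pow_atTop_nhds_zero_of_lt_one S.hmu0.le S.hmu1
    simpa using this.mul_const (S.eps 0 i)
  -- stationarity of cluster points
  rintro xstar ⟨φ, hφ, hconv⟩ i hne
  have hφtop : Tendsto φ atTop atTop := hφ.tendsto_atTop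
  have hΔφ : Tendsto (fun k => S.x (φ k + 1) - S.x (φ k)) atTop (𝓝 0) := hΔ.comp hφtop
  have hconv1 : Tendsto (fun k => S.x (φ k + 1)) atTop (𝓝 xstar) := by
    have := hconv.add hΔφ
    simp only [add_zero] at this
    refine this.congr fun k => ?_
    abel
  have hcoord : ∀ (y : ℕ → EuclideanSpace ℝ (Fin n)) (z : EuclideanSpace ℝ (Fin n)),
      Tendsto y atTop (𝓝 z) → Tendsto (fun k => y k i) atTop (𝓝 (z i)) := by
    intro y z h
    have := ((EuclideanSpace.proj (𝕜 := ℝ) i).continuous.tendsto z).comp h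
    simpa [Function.comp_def] using this
  have hxi : Tendsto (fun k => S.x (φ k) i) atTop (𝓝 (xstar i)) := hcoord _ _ hconv
  have hxpi : Tendsto (fun k => S.x (φ k + 1) i) atTop (𝓝 (xstar i)) := hcoord _ _ hconv1
  set σ : ℝ := Real.sign (xstar i) with hσ
  have hsign : ∀ᶠ k in atTop, S.x (φ k + 1) i ≠ 0
      ∧ Real.sign (S.x (φ k + 1) i) = σ := by
    rcases lt_or_gt_of_ne hne with hneg | hpos
    · filter_upwards [hxpi.eventually_lt_const hneg] with k hk
      exact ⟨ne_of_lt hk, by rw [Real.sign_of_neg hk, hσ, Real.sign_of_neg hneg]⟩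
    · filter_upwards [hxpi.eventually_const_lt hpos] with k hk
      exact ⟨ne_of_gt hk, by rw [Real.sign_of_pos hk, hσ, Real.sign_of_pos hpos]⟩
  have hopt : ∀ k, S.x (k + 1) i ≠ 0 → gradient (S.Q k) (S.x (k + 1)) i
      + S.lam * wfun S.p (S.x k i) (S.eps k i) * Real.sign (S.x (k + 1) i) = 0 := by
    intro k hki
    exact coord_opt (S.Q k) (S.hQ_diff k) (fun j => wfun S.p (S.x k j) (S.eps k j)) S.lam
      (S.x (k + 1)) (S.hmin k) i hki
  have hwlim : Tendsto (fun k => wfun S.p (S.x (φ k) i) (S.eps (φ k) i)) atTop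
      (𝓝 (S.p * |xstar i| ^ (S.p - 1))) := by
    have hbase : Tendsto (fun k => |S.x (φ k) i| + S.eps (φ k) i) atTop (𝓝 |xstar i|) := by
      have h1 : Tendsto (fun k => |S.x (φ k) i|) atTop (𝓝 |xstar i|) := hxi.abs
      have h2 := (heps0 i).comp hφtop
      simpa using h1.add h2
    have hrp := hbase.rpow_const (p := S.p - 1) (Or.inl (abs_ne_zero.2 hne))
    simpa [wfun] using hrp.const_mul S.p
  have hgrad : Tendsto (fun k => gradient (S.Q (φ k)) (S.x (φ k + 1)) i) atTop
      (𝓝 (gradient S.f xstar i)) := by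
    have hkey : Tendsto (fun k => gradient (S.Q (φ k)) (S.x (φ k + 1)) i
        - gradient S.f xstar i) atTop (𝓝 0) := by
      have hbnd : Tendsto (fun k => S.L * ‖S.x (φ k + 1) - S.x (φ k)‖
          + S.Lf * ‖S.x (φ k) - xstar‖) atTop (𝓝 0) := by
        have hn1 : Tendsto (fun k => ‖S.x (φ k + 1) - S.x (φ k)‖) atTop (𝓝 0) :=
          tendsto_zero_iff_norm_tendsto_zero.mp hΔφ
        have hn2 : Tendsto (fun k => ‖S.x (φ k) - xstar‖) atTop (𝓝 0) := by
          have hc2 := tendsto_sub_nhds_zero_iff.mpr hconv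
          exact tendsto_zero_iff_norm_tendsto_zero.mp hc2
        simpa using (hn1.const_mul S.L).add (hn2.const_mul S.Lf)
      apply squeeze_zero_norm _ hbnd
      intro k
      (
        have hsplit : gradient (S.Q (φ k)) (S.x (φ k + 1)) i - gradient S.f xstar i
            = (gradient (S.Q (φ k)) (S.x (φ k + 1)) i - gradient (S.Q (φ k)) (S.x (φ k)) i)
              + (gradient S.f (S.x (φ k)) i - gradient S.f xstar i) := by
          rw [S.hQ_grad (φ k)]
          ring
        have h1 : |gradient (S.Q (φ k)) (S.x (φ k + 1)) i - gradient (S.Q (φ k)) (S.x (φ k)) i|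
            ≤ S.L * ‖S.x (φ k + 1) - S.x (φ k)‖ := by
          have hc := coord_abs_le_norm
            (gradient (S.Q (φ k)) (S.x (φ k + 1)) - gradient (S.Q (φ k)) (S.x (φ k))) i
          have happ : (gradient (S.Q (φ k)) (S.x (φ k + 1))
              - gradient (S.Q (φ k)) (S.x (φ k))) i
              = gradient (S.Q (φ k)) (S.x (φ k + 1)) i - gradient (S.Q (φ k)) (S.x (φ k)) i :=
            rfl
          rw [happ] at hc
          exact hc.trans (S.hQ_lip (φ k) _ _)
        have h2 : |gradient S.f (S.x (φ k)) i - gradient S.f xstar i|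
            ≤ S.Lf * ‖S.x (φ k) - xstar‖ := by
          have hc := coord_abs_le_norm (gradient S.f (S.x (φ k)) - gradient S.f xstar) i
          have happ : (gradient S.f (S.x (φ k)) - gradient S.f xstar) i
              = gradient S.f (S.x (φ k)) i - gradient S.f xstar i := rfl
          rw [happ] at hc
          exact hc.trans (S.hf_lip _ _)
        rw [Real.norm_eq_abs, hsplit]
        exact (abs_add_le _ _).trans (add_le_add h1 h2))
    have := hkey.add_const (gradient S.f xstar i)
    simpa using this
  have hAeq : ∀ᶠ k in atTop, gradient (S.Q (φ k)) (S.x (φ k + 1)) i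
      = -(S.lam * wfun S.p (S.x (φ k) i) (S.eps (φ k) i) * σ) := by
    filter_upwards [hsign] with k hk
    have h := hopt (φ k) hk.1
    rw [hk.2] at h
    linarith
  have hlim2 : Tendsto (fun k => -(S.lam * wfun S.p (S.x (φ k) i) (S.eps (φ k) i) * σ))
      atTop (𝓝 (-(S.lam * (S.p * |xstar i| ^ (S.p - 1)) * σ))) :=
    ((hwlim.const_mul S.lam).mul_const σ).neg
  have hgrad' : Tendsto (fun k => gradient (S.Q (φ k)) (S.x (φ k + 1)) i) atTop
      (𝓝 (-(S.lam * (S.p * |xstar i| ^ (S.p - 1)) * σ))) :=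
    hlim2.congr' (hAeq.mono fun k h => h.symm)
  have hfinal := tendsto_nhds_unique hgrad hgrad'
  rw [hfinal, hσ]
  ring
end

section
/- In the IRL1 setting with the SR update rule and level-set boundedness, for each coordinate i: if inf_k ε_i^k > 0 (equivalently, ε_i is not updated after some iteration), then there exists k̃ ∈ ℕ such that x_i^k = 0 for all k > k̃; in particular x_i^k → 0. -/
open Filter Topology

/-- The IRL1 setting with the "smart reweighting" (SR) ε-update rule: fixed data
`p ∈ (0,1)`, `λ > 0`, `μ ∈ (0,1)`, a differentiable `f` with `Lf`-Lipschitz gradient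
(`Lf ≥ 0`), iterates `x^k`, positive parameters `ε^k` updated by the SR rule
(`ε_i^{k+1} = ε_i^k` if `x_i^{k+1} = 0`, `ε_i^{k+1} ≤ μ ε_i^k` if `x_i^{k+1} ≠ 0`),
and for each `k` a differentiable model `Q_k` with `∇Q_k(x^k) = ∇f(x^k)`,
`M`-strongly convex with `M > Lf/2` (meaning `z ↦ Q_k z - (M/2)‖z‖²` is convex),
`∇Q_k` `L`-Lipschitz, such that `x^{k+1}` globally minimizes
`G(·; x^k, ε^k) = Q_k(·) + λ Σᵢ w(xᵢ^k, εᵢ^k)|·ᵢ|`. -/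
structure IRL1SR (n : ℕ) where
  p : ℝ
  lam : ℝ
  mu : ℝ
  Lf : ℝ
  M : ℝ
  L : ℝ
  f : EuclideanSpace ℝ (Fin n) → ℝ
  x : ℕ → EuclideanSpace ℝ (Fin n)
  eps : ℕ → Fin n → ℝ
  Q : ℕ → EuclideanSpace ℝ (Fin n) → ℝ
  hp0 : 0 < p
  hp1 : p < 1
  hlam : 0 < lam
  hmu0 : 0 < mu
  hmu1 : mu < 1
  hLf : 0 ≤ Lf
  hM : Lf / 2 < M
  hf_diff : Differentiable ℝ f
  hf_lip : ∀ a b, ‖gradient f a - gradient f b‖ ≤ Lf * ‖a - b‖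
  heps_pos : ∀ k i, 0 < eps k i
  heps_SR_zero : ∀ k i, x (k + 1) i = 0 → eps (k + 1) i = eps k i
  heps_SR_nonzero : ∀ k i, x (k + 1) i ≠ 0 → eps (k + 1) i ≤ mu * eps k i
  hQ_diff : ∀ k, Differentiable ℝ (Q k)
  hQ_grad : ∀ k, gradient (Q k) (x k) = gradient f (x k)
  hQ_sconv : ∀ k, ConvexOn ℝ Set.univ (fun z => Q k z - M / 2 * ‖z‖ ^ 2)
  hQ_lip : ∀ k a b, ‖gradient (Q k) a - gradient (Q k) b‖ ≤ L * ‖a - b‖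
  hmin : ∀ k, ∀ z : EuclideanSpace ℝ (Fin n),
    Q k (x (k + 1)) + lam * ∑ i, wfun p (x k i) (eps k i) * |x (k + 1) i|
      ≤ Q k z + lam * ∑ i, wfun p (x k i) (eps k i) * |z i|

/-- The smoothed objective `F(x, ε) = f(x) + λ Σᵢ (|xᵢ| + εᵢ)^p`. -/
noncomputable def IRL1SR.Feps {n : ℕ} (S : IRL1SR n)
    (z : EuclideanSpace ℝ (Fin n)) (e : Fin n → ℝ) : ℝ :=
  S.f z + S.lam * ∑ i, (|z i| + e i) ^ S.p

/-- The objective `F(x) = f(x) + λ Σᵢ |xᵢ|^p`. -/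
noncomputable def IRL1SR.Fobj {n : ℕ} (S : IRL1SR n) (z : EuclideanSpace ℝ (Fin n)) : ℝ :=
  S.f z + S.lam * ∑ i, |z i| ^ S.p

/-- The level set `{x : F(x) ≤ F(x⁰, ε⁰)}` is bounded. -/
def IRL1SR.LevelBounded {n : ℕ} (S : IRL1SR n) : Prop :=
  Bornology.IsBounded {z : EuclideanSpace ℝ (Fin n) | S.Fobj z ≤ S.Feps (S.x 0) (S.eps 0)}

/-- In the IRL1 setting with the SR update rule and bounded level
set, for each coordinate `i`: if `inf_k ε_i^k > 0`, then there is `k̃` with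
`x_i^k = 0` for all `k > k̃`; in particular `x_i^k → 0`. -/
theorem stmt16 {n : ℕ} (S : IRL1SR n) (hbdd : S.LevelBounded) (i : Fin n)
    (h : ∃ c > (0 : ℝ), ∀ k : ℕ, c ≤ S.eps k i) :
    (∃ kt : ℕ, ∀ k > kt, S.x k i = 0) ∧
    Tendsto (fun k => S.x k i) atTop (nhds 0) := by

  obtain ⟨c, hc, hce⟩ := h
  -- eps is antitone in k
  have hmono : ∀ k, S.eps (k + 1) i ≤ S.eps k i := by
    intro k
    by_cases hx : S.x (k + 1) i = 0
    · exact (S.heps_SR_zero k i hx).le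
    · calc S.eps (k + 1) i ≤ S.mu * S.eps k i := S.heps_SR_nonzero k i hx
        _ ≤ 1 * S.eps k i := by
            apply mul_le_mul_of_nonneg_right S.hmu1.le (S.heps_pos k i).le
        _ = S.eps k i := one_mul _
  have hanti : ∀ a b, a ≤ b → S.eps b i ≤ S.eps a i := by
    intro a b hab
    induction b with
    | zero => simp_all
    | succ b ih =>
      rcases Nat.lt_or_ge a (b + 1) with h1 | h1
      · exact (hmono b).trans (ih (Nat.lt_succ_iff.mp h1))
      · have : a = b + 1 := le_antisymm hab h1
        simp [this]
  -- the set of k with x (k+1) i ≠ 0 is bounded above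
  have hkey : ∃ kt : ℕ, ∀ k > kt, S.x k i = 0 := by
    by_contra hcon
    push_neg at hcon
    -- for every m there is k with eps k i ≤ mu^m * eps 0 i
    have hstep : ∀ m : ℕ, ∃ k, S.eps k i ≤ S.mu ^ m * S.eps 0 i := by
      intro m
      induction m with
      | zero => exact ⟨0, by simp⟩
      | succ m ih =>
        obtain ⟨k, hk⟩ := ih
        obtain ⟨j, hjk, hjne⟩ := hcon k
        obtain ⟨j', rfl⟩ : ∃ j', j = j' + 1 := by
          cases j with
          | zero => exact absurd hjk (by omega)
          | succ j' => exact ⟨j', rfl⟩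
        refine ⟨j' + 1, ?_⟩
        have h1 : S.eps (j' + 1) i ≤ S.mu * S.eps j' i := S.heps_SR_nonzero j' i hjne
        have h2 : S.eps j' i ≤ S.eps k i := hanti k j' (by omega)
        calc S.eps (j' + 1) i ≤ S.mu * S.eps j' i := h1
          _ ≤ S.mu * S.eps k i := by
              exact mul_le_mul_of_nonneg_left h2 S.hmu0.le
          _ ≤ S.mu * (S.mu ^ m * S.eps 0 i) := mul_le_mul_of_nonneg_left hk S.hmu0.le
          _ = S.mu ^ (m + 1) * S.eps 0 i := by ring
    -- mu^m * eps 0 i → 0, contradicting c ≤ eps k i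
    have htend : Tendsto (fun m : ℕ => S.mu ^ m * S.eps 0 i) atTop (nhds 0) := by
      have := tendsto_pow_atTop_nhds_zero_of_lt_one S.hmu0.le S.hmu1
      simpa using this.mul_const (S.eps 0 i)
    obtain ⟨m, hm⟩ := ((htend.eventually (gt_mem_nhds hc)).exists)
    obtain ⟨k, hk⟩ := hstep m
    exact absurd (hce k) (by linarith)
  refine ⟨hkey, ?_⟩
  obtain ⟨kt, hkt⟩ := hkey
  have : (fun k : ℕ => (0 : ℝ)) =ᶠ[atTop] fun k => S.x k i := by
    filter_upwards [eventually_gt_atTop kt] with k hk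
    exact (hkt k hk).symm
  exact tendsto_const_nhds.congr' this
end
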